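/- If M is an unbounded graph matroid family and G is an M-reconstructible graph (without isolated vertices) with at least two edges, then the matroid M(G) has no bridges (coloops). -/

import Mathlib

/-!
Common framework: graph matroid families.

A finite simple graph (without isolated vertices) is identified with its edge
set: a finite set of non-diagonal elements of `Sym2 ℕ`.  A graph matroid
family is encoded, following the paper, as a finitary matroid on the edge set
of the countable complete graph on `ℕ` that is invariant under all
permutations of `ℕ`.
-/

/-- The set of vertices covered by a set of edges. -/
def eSupp (E : Set (Sym2 ℕ)) : Set ℕ := {v : ℕ | ∃ e ∈ E, v ∈ e}

/-- The edge set of the complete graph on the vertex set `V`. -/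
def clique (V : Set ℕ) : Set (Sym2 ℕ) := {e : Sym2 ℕ | ¬ e.IsDiag ∧ ∀ v ∈ e, v ∈ V}

/-- The edge set of the complete graph `K_n` on the vertices `0, …, n-1`. -/
def cliqueN (n : ℕ) : Set (Sym2 ℕ) := clique {v : ℕ | v < n}

/-- `E` is (the edge set of) a finite simple graph. -/
def IsGraph (E : Set (Sym2 ℕ)) : Prop := E.Finite ∧ ∀ e ∈ E, ¬ e.IsDiag

/-- The degree of the vertex `v` in the edge set `E`. -/
noncomputable def deg (E : Set (Sym2 ℕ)) (v : ℕ) : ℕ := {e ∈ E | v ∈ e}.ncard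

/-- The minimum degree of (the graph with) edge set `E` (whose vertex set is `eSupp E`). -/
noncomputable def minDeg (E : Set (Sym2 ℕ)) : ℕ := sInf {k : ℕ | ∃ v ∈ eSupp E, deg E v = k}

/-- Deleting a set `S` of vertices from the graph with edge set `E`. -/
def deleteVerts (E : Set (Sym2 ℕ)) (S : Set ℕ) : Set (Sym2 ℕ) := {e ∈ E | ∀ v ∈ e, v ∉ S}

/-- The graph with edge set `E` is `k`-connected: it has more than `k` vertices and
deleting any set of fewer than `k` vertices leaves a connected graph. -/
def KConnected (k : ℕ) (E : Set (Sym2 ℕ)) : Prop :=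
  k < (eSupp E).ncard ∧
  ∀ S : Finset ℕ, S.card < k →
    ((SimpleGraph.fromEdgeSet E).induce (eSupp E \ ↑S)).Connected

/-- `E` is a forest. -/
def IsForest (E : Set (Sym2 ℕ)) : Prop := (SimpleGraph.fromEdgeSet E).IsAcyclic

/-- `E` is a matching: no two distinct edges of `E` share a vertex. -/
def IsMatching (E : Set (Sym2 ℕ)) : Prop :=
  ∀ e ∈ E, ∀ f ∈ E, e ≠ f → ∀ v : ℕ, v ∈ e → v ∉ f

/-- `E` is a star `K_{1,m}` with `m` edges. -/
def IsStar (m : ℕ) (E : Set (Sym2 ℕ)) : Prop :=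
  ∃ (c : ℕ) (L : Finset ℕ), c ∉ L ∧ L.card = m ∧ E = (fun x => s(c, x)) '' ↑L

/-- `C` is a cycle graph `C_n` for some `n ≥ 3`. -/
def IsCycleGraph (C : Set (Sym2 ℕ)) : Prop :=
  ∃ n : ℕ, 3 ≤ n ∧ ∃ f : ZMod n → ℕ, Function.Injective f ∧
    C = {e : Sym2 ℕ | ∃ i : ZMod n, e = s(f i, f (i + 1))}

/-- The rank of the set `X` in the matroid `M₀`: the supremum of the cardinalities of
independent subsets of `X` (as a natural number; all sets we use are finite). -/
noncomputable def mrk (M₀ : Matroid (Sym2 ℕ)) (X : Set (Sym2 ℕ)) : ℕ :=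
  sSup {n : ℕ | ∃ I ⊆ X, M₀.Indep I ∧ I.ncard = n}

/-- A vertical `k`-separation of the matroid `M₀`. -/
def VerticalSep (M₀ : Matroid (Sym2 ℕ)) (k : ℕ) (E₁ E₂ : Set (Sym2 ℕ)) : Prop :=
  Disjoint E₁ E₂ ∧ E₁ ∪ E₂ = M₀.E ∧
  k ≤ mrk M₀ E₁ ∧ k ≤ mrk M₀ E₂ ∧
  mrk M₀ E₁ + mrk M₀ E₂ + 1 ≤ mrk M₀ M₀.E + k

/-- The matroid `M₀` is vertically `k`-connected. -/
def VerticallyConnected (M₀ : Matroid (Sym2 ℕ)) (k : ℕ) : Prop :=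
  k ≤ mrk M₀ M₀.E ∧
  ∀ k' : ℕ, 0 < k' → k' < k → ∀ E₁ E₂ : Set (Sym2 ℕ), ¬ VerticalSep M₀ k' E₁ E₂

/-- A `d`-dimensional abstract rigidity matroid on the complete graph with vertex set `V`. -/
def IsARM (d : ℕ) (V : Set ℕ) (M₀ : Matroid (Sym2 ℕ)) : Prop :=
  M₀.E = clique V ∧
  (∀ E₁ E₂ : Set (Sym2 ℕ), E₁ ⊆ clique V → E₂ ⊆ clique V →
      (eSupp E₁ ∩ eSupp E₂).ncard < d →
      M₀.closure (E₁ ∪ E₂) = M₀.closure E₁ ∪ M₀.closure E₂) ∧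
  (∀ E₁ E₂ : Set (Sym2 ℕ), E₁ ⊆ clique V → E₂ ⊆ clique V →
      d ≤ (eSupp E₁ ∩ eSupp E₂).ncard →
      M₀.closure E₁ = clique (eSupp E₁) → M₀.closure E₂ = clique (eSupp E₂) →
      M₀.closure (E₁ ∪ E₂) = clique (eSupp E₁ ∪ eSupp E₂))

/-- The `d`-dimensional edge split operation: replace an edge `uv` of `G` by a new
vertex `w` joined to `u` and `v`, as well as to `d - 1` other vertices of `G`. -/
def EdgeSplit (d : ℕ) (G G' : Set (Sym2 ℕ)) : Prop :=
  ∃ (u v w : ℕ) (X : Finset ℕ),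
    s(u, v) ∈ G ∧ w ∉ eSupp G ∧ ↑X ⊆ eSupp G ∧ X.card = d - 1 ∧ u ∉ X ∧ v ∉ X ∧
    G' = (G \ {s(u, v)}) ∪ {s(w, u), s(w, v)} ∪ ((fun x => s(w, x)) '' ↑X)

/-- A graph matroid family: a finitary matroid on the edge set of the countable
complete graph on `ℕ`, invariant under all permutations of `ℕ`. -/
structure GraphMatroidFamily where
  /-- The underlying matroid on the edge set of `K_ℕ`. -/
  M : Matroid (Sym2 ℕ)
  ground_eq : M.E = {e : Sym2 ℕ | ¬ e.IsDiag}
  finitary : M.Finitary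
  invariant : ∀ σ : Equiv.Perm ℕ, ∀ I : Set (Sym2 ℕ),
    M.Indep I → M.Indep (Sym2.map σ '' I)

namespace GraphMatroidFamily

variable (M : GraphMatroidFamily)

/-- The rank function of the family: `M.rk E` is the rank of the matroid `M(G)` for
any graph `G` whose edge set contains `E`. -/
noncomputable def rk (E : Set (Sym2 ℕ)) : ℕ := mrk M.M E

/-- A set of edges (a graph) is `M`-independent. -/
def Indep (E : Set (Sym2 ℕ)) : Prop := M.M.Indep E

/-- `C` is an `M`-circuit: a graph that is not `M`-independent, but such that deleting
any single edge from it yields an `M`-independent graph. -/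
def IsCircuit (C : Set (Sym2 ℕ)) : Prop :=
  IsGraph C ∧ ¬ M.Indep C ∧ ∀ e ∈ C, M.Indep (C \ {e})

/-- The graph with edge set `E` is `M`-rigid. -/
def Rigid (E : Set (Sym2 ℕ)) : Prop := M.rk E = M.rk (clique (eSupp E))

/-- The graph with vertex set `V` and edge set `E` is `M`-rigid. -/
def RigidOn (V : Set ℕ) (E : Set (Sym2 ℕ)) : Prop := M.rk E = M.rk (clique V)

/-- `M` is trivial if every (finite, simple) graph is `M`-independent. -/
def Trivial : Prop := ∀ E : Set (Sym2 ℕ), IsGraph E → M.Indep E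

/-- `M` is unbounded: the sequence `r(K_n)` is unbounded. -/
def Unbounded : Prop := ∀ B : ℕ, ∃ n : ℕ, B < M.rk (cliqueN n)

/-- `M` is bounded: the sequence `r(K_n)` is bounded. -/
def Bounded : Prop := ∃ B : ℕ, ∀ n : ℕ, M.rk (cliqueN n) ≤ B

/-- For a bounded family, `m` is the rank `r(M)` of `M`: the maximum (limit) of the
monotone sequence `r(K_n)`. -/
def HasRank (m : ℕ) : Prop :=
  (∀ n : ℕ, M.rk (cliqueN n) ≤ m) ∧ ∃ n : ℕ, M.rk (cliqueN n) = m

/-- `d` is the dimensionality of (the nontrivial family) `M`: the least `d` such that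
there is an `M`-circuit with minimum degree `d + 1`. -/
def IsDimensionality (d : ℕ) : Prop :=
  IsLeast {d : ℕ | ∃ C, M.IsCircuit C ∧ minDeg C = d + 1} d

/-- `t` is the threshold of (the nontrivial family) `M` with dimensionality `d`:
the least value of `|V(C)| - 1` over all `M`-circuits `C` with minimum degree `d + 1`. -/
def IsThreshold (d t : ℕ) : Prop :=
  IsLeast {t : ℕ | ∃ C, M.IsCircuit C ∧ minDeg C = d + 1 ∧ (eSupp C).ncard = t + 1} t

/-- `M` has the Lovász–Yemini property. -/
def LovaszYemini : Prop :=
  ∃ c : ℕ, ∀ E : Set (Sym2 ℕ), IsGraph E → KConnected c E → M.Rigid E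

/-- `ψ` is an isomorphism between the matroids `M(G)` and `M(H)`. -/
def MatroidIso (G H : Set (Sym2 ℕ)) (ψ : Sym2 ℕ → Sym2 ℕ) : Prop :=
  Set.BijOn ψ G H ∧ ∀ S ⊆ G, (M.Indep S ↔ M.Indep (ψ '' S))

/-- `G` is `M`-reconstructible: every isomorphism between `M(G)` and `M(H)` (for a graph
`H` without isolated vertices) is induced by a graph isomorphism. -/
def Reconstructible (G : Set (Sym2 ℕ)) : Prop :=
  ∀ H : Set (Sym2 ℕ), IsGraph H → ∀ ψ : Sym2 ℕ → Sym2 ℕ, M.MatroidIso G H ψ →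
    ∃ φ : ℕ → ℕ, Set.BijOn φ (eSupp G) (eSupp H) ∧ ∀ e ∈ G, ψ e = Sym2.map φ e

/-- `M` has the Whitney property. -/
def Whitney : Prop :=
  ∃ c : ℕ, ∀ E : Set (Sym2 ℕ), IsGraph E → KConnected c E → M.Reconstructible E

/-- `M` is the union of the graph matroid families `Ms`. -/
def IsUnionOf {k : ℕ} (Ms : Fin k → GraphMatroidFamily) : Prop :=
  ∀ I : Set (Sym2 ℕ),
    M.Indep I ↔ ∃ Is : Fin k → Set (Sym2 ℕ), (∀ i, (Ms i).Indep (Is i)) ∧ I = ⋃ i, Is i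

/-- `M` is a family of `d`-dimensional abstract rigidity matroids. -/
def FamilyOfARM (d : ℕ) : Prop :=
  ∀ n : ℕ, d ≤ n → IsARM d {v : ℕ | v < n} (M.M.restrict (cliqueN n))

/-- `M` is `1`-extendable: its dimensionality `d` is finite and positive, and the
`d`-dimensional edge split operation preserves `M`-independence. -/
def OneExtendable : Prop :=
  ∃ d : ℕ, 0 < d ∧ M.IsDimensionality d ∧
    ∀ G G' : Set (Sym2 ℕ), IsGraph G → M.Indep G → EdgeSplit d G G' → M.Indep G'

/-- `G` is `k`-vertex-redundantly `M`-rigid. -/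
def VertexRedundantlyRigid (k : ℕ) (G : Set (Sym2 ℕ)) : Prop :=
  M.Rigid G ∧ ∀ S : Finset ℕ, ↑S ⊆ eSupp G → S.card ≤ k →
    M.RigidOn (eSupp G \ ↑S) (deleteVerts G ↑S)

end GraphMatroidFamily

/-! ### Auxiliary machinery for Statement 13 -/

section Aux13

open Set

private lemma sym2_mem_finite (e : Sym2 ℕ) : {v : ℕ | v ∈ e}.Finite := by
  induction e using Sym2.ind with
  | _ a b =>
    apply Set.Finite.subset (Set.toFinite {a, b})
    intro v hv
    rcases Sym2.mem_iff.mp hv with h | h <;> simp [h]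

lemma eSupp_finite {E : Set (Sym2 ℕ)} (h : E.Finite) : (eSupp E).Finite := by
  have heq : eSupp E = ⋃ e ∈ E, {v : ℕ | v ∈ e} := by
    ext v; simp [eSupp]
  rw [heq]
  exact h.biUnion fun e _ => sym2_mem_finite e

lemma mem_eSupp_of {E : Set (Sym2 ℕ)} {g : Sym2 ℕ} {v : ℕ} (hg : g ∈ E) (hv : v ∈ g) :
    v ∈ eSupp E := ⟨g, hg, hv⟩

lemma eSupp_mono {A B : Set (Sym2 ℕ)} (h : A ⊆ B) : eSupp A ⊆ eSupp B :=
  fun _ ⟨e, he, hv⟩ => ⟨e, h he, hv⟩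

lemma eSupp_union (A B : Set (Sym2 ℕ)) : eSupp (A ∪ B) = eSupp A ∪ eSupp B := by
  ext v
  constructor
  · rintro ⟨e, (he | he), hv⟩
    exacts [Or.inl ⟨e, he, hv⟩, Or.inr ⟨e, he, hv⟩]
  · rintro (⟨e, he, hv⟩ | ⟨e, he, hv⟩)
    exacts [⟨e, Or.inl he, hv⟩, ⟨e, Or.inr he, hv⟩]

lemma eSupp_single (a b : ℕ) : eSupp {s(a, b)} = {a, b} := by
  ext v
  constructor
  · rintro ⟨e, he, hv⟩
    rw [Set.mem_singleton_iff] at he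
    subst he
    rcases Sym2.mem_iff.mp hv with h | h <;> simp [h]
  · intro hv
    refine ⟨s(a, b), rfl, ?_⟩
    rcases hv with h | h
    · subst h; exact Sym2.mem_mk_left _ _
    · rw [Set.mem_singleton_iff] at h; subst h; exact Sym2.mem_mk_right _ _

lemma sym2_map_congr {g h : ℕ → ℕ} {e : Sym2 ℕ} (H : ∀ v ∈ e, g v = h v) :
    Sym2.map g e = Sym2.map h e := by
  induction e using Sym2.ind with
  | _ a b =>
    rw [Sym2.map_pair_eq, Sym2.map_pair_eq, H a (Sym2.mem_mk_left a b),
      H b (Sym2.mem_mk_right a b)]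

lemma sym2_map_fix {g : ℕ → ℕ} {e : Sym2 ℕ} (H : ∀ v ∈ e, g v = v) : Sym2.map g e = e := by
  rw [sym2_map_congr (h := id) H, Sym2.map_id, id]

lemma image_fix {σ : ℕ → ℕ} {S : Set (Sym2 ℕ)} (h : ∀ v ∈ eSupp S, σ v = v) :
    Sym2.map σ '' S = S := by
  have he : ∀ e ∈ S, Sym2.map σ e = e := fun e heS => sym2_map_fix fun v hv => h v ⟨e, heS, hv⟩
  ext e
  constructor
  · rintro ⟨e₀, he₀, rfl⟩
    rw [he e₀ he₀]; exact he₀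
  · intro heS
    exact ⟨e, heS, he e heS⟩

lemma eSupp_image (f : ℕ → ℕ) (S : Set (Sym2 ℕ)) : eSupp (Sym2.map f '' S) = f '' eSupp S := by
  ext v
  constructor
  · rintro ⟨e, ⟨e₀, he₀, rfl⟩, hv⟩
    obtain ⟨u, hu, huv⟩ := Sym2.mem_map.mp hv
    exact ⟨u, ⟨e₀, he₀, hu⟩, huv⟩
  · rintro ⟨u, ⟨e₀, he₀, hu⟩, rfl⟩
    exact ⟨Sym2.map f e₀, ⟨e₀, he₀, rfl⟩, Sym2.mem_map.mpr ⟨u, hu, rfl⟩⟩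

/-- Any injection on a finite subset of `ℕ` extends to a permutation of `ℕ`. -/
lemma exists_perm_extend {A : Set ℕ} (hA : A.Finite) {f : ℕ → ℕ} (hf : Set.InjOn f A) :
    ∃ σ : Equiv.Perm ℕ, ∀ a ∈ A, σ a = f a := by
  classical
  have hBfin : (f '' A).Finite := hA.image f
  have hAc : (Aᶜ : Set ℕ).Infinite := hA.infinite_compl
  have hBc : ((f '' A)ᶜ : Set ℕ).Infinite := hBfin.infinite_compl
  haveI := hAc.to_subtype
  haveI := hBc.to_subtype
  letI : Denumerable ↥(Aᶜ) := Nat.Subtype.denumerable _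
  letI : Denumerable ↥((f '' A)ᶜ) := Nat.Subtype.denumerable _
  let e₀ : ↥A ≃ ↥(f '' A) := Equiv.Set.imageOfInjOn f A hf
  let e₁ : ↥(Aᶜ : Set ℕ) ≃ ↥((f '' A)ᶜ : Set ℕ) :=
    (Denumerable.eqv _).trans (Denumerable.eqv _).symm
  obtain ⟨σ, hσ⟩ := (Equiv.Set.compl e₀).symm e₁
  exact ⟨σ, fun a ha => by simpa [e₀, Equiv.Set.imageOfInjOn] using hσ ⟨a, ha⟩⟩


/-- A permutation sending `p' ↦ p`, `q' ↦ q` and fixing the finite set `V` pointwise. -/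
lemma exists_perm_pair (V : Set ℕ) (hV : V.Finite) {p q p' q' : ℕ}
    (hp : p ∉ V) (hq : q ∉ V) (hp' : p' ∉ V) (hq' : q' ∉ V)
    (hpq : p ≠ q) (hpq' : p' ≠ q') :
    ∃ σ : Equiv.Perm ℕ, σ p' = p ∧ σ q' = q ∧ ∀ v ∈ V, σ v = v := by
  have hfin : (V ∪ {p, q, p', q'}).Finite := hV.union (Set.toFinite _)
  obtain ⟨emb⟩ : Nonempty (ℕ ↪ ↥((V ∪ {p, q, p', q'})ᶜ)) := ⟨hfin.infinite_compl.natEmbedding⟩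
  have hg₁ : (emb 0 : ℕ) ∉ V ∪ {p, q, p', q'} := (emb 0).2
  have hg₂ : (emb 1 : ℕ) ∉ V ∪ {p, q, p', q'} := (emb 1).2
  set g₁ : ℕ := (emb 0 : ℕ) with hg₁def
  set g₂ : ℕ := (emb 1 : ℕ) with hg₂def
  have hg12 : g₁ ≠ g₂ := fun h => by simpa using emb.injective (Subtype.ext h)
  simp only [Set.mem_union, Set.mem_insert_iff, Set.mem_singleton_iff, not_or] at hg₁ hg₂
  obtain ⟨hg₁V, hg₁p, hg₁q, hg₁p', hg₁q'⟩ := hg₁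
  obtain ⟨hg₂V, hg₂p, hg₂q, hg₂p', hg₂q'⟩ := hg₂
  refine ⟨(Equiv.swap g₁ p) * (Equiv.swap g₂ q) * (Equiv.swap p' g₁) * (Equiv.swap q' g₂),
    ?_, ?_, ?_⟩
  · simp only [Equiv.Perm.mul_apply]
    rw [Equiv.swap_apply_of_ne_of_ne hpq' (fun h => hg₂p' (h.symm)),
      Equiv.swap_apply_left, Equiv.swap_apply_of_ne_of_ne hg12 hg₁q,
      Equiv.swap_apply_left]
  · simp only [Equiv.Perm.mul_apply]
    rw [Equiv.swap_apply_left, Equiv.swap_apply_of_ne_of_ne hg₂p' (Ne.symm hg12),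
      Equiv.swap_apply_left, Equiv.swap_apply_of_ne_of_ne (fun h => hg₁q h.symm) (Ne.symm hpq)]
  · intro v hv
    have h1 : v ≠ q' := fun h => hq' (h ▸ hv)
    have h2 : v ≠ g₂ := fun h => hg₂V (h ▸ hv)
    have h3 : v ≠ p' := fun h => hp' (h ▸ hv)
    have h4 : v ≠ g₁ := fun h => hg₁V (h ▸ hv)
    have h5 : v ≠ q := fun h => hq (h ▸ hv)
    have h6 : v ≠ p := fun h => hp (h ▸ hv)
    simp only [Equiv.Perm.mul_apply]
    rw [Equiv.swap_apply_of_ne_of_ne h1 h2, Equiv.swap_apply_of_ne_of_ne h3 h4,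
      Equiv.swap_apply_of_ne_of_ne h2 h5, Equiv.swap_apply_of_ne_of_ne h4 h6]

namespace GraphMatroidFamily

variable (M : GraphMatroidFamily)

lemma indep_map_iff (σ : Equiv.Perm ℕ) {S : Set (Sym2 ℕ)} :
    M.Indep (Sym2.map σ '' S) ↔ M.Indep S := by
  constructor
  · intro h
    have h2 := M.invariant σ.symm _ h
    rw [Set.image_image] at h2
    have heq : ∀ e ∈ S, Sym2.map (⇑σ.symm) (Sym2.map (⇑σ) e) = e := by
      intro e _
      rw [Sym2.map_map]
      exact sym2_map_fix fun v _ => σ.symm_apply_apply v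
    rwa [Set.image_congr heq, Set.image_id'] at h2
  · exact M.invariant σ S

lemma nondiag_of_mem_indep {S : Set (Sym2 ℕ)} (h : M.Indep S) {e : Sym2 ℕ} (he : e ∈ S) :
    ¬ e.IsDiag := by
  have h2 : e ∈ M.M.E := h.subset_ground he
  rwa [M.ground_eq] at h2

lemma encard_le_of_indep_subset_closure {J X : Set (Sym2 ℕ)}
    (hJ : M.Indep J) (hJX : J ⊆ M.M.closure X) : J.encard ≤ X.encard := by
  obtain ⟨I, hI⟩ := M.M.exists_isBasis' X
  have hcl : M.M.closure I = M.M.closure X := hI.closure_eq_closure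
  obtain ⟨B, hB, hJB⟩ := Matroid.Indep.subset_isBasis_of_subset hJ
    (show J ⊆ M.M.closure I by rwa [hcl]) (M.M.closure_subset_ground I)
  calc J.encard ≤ B.encard := Set.encard_mono hJB
    _ = I.encard := hB.encard_eq_encard hI.indep.isBasis_closure
    _ ≤ X.encard := Set.encard_mono hI.subset

lemma false_of_clique_subset_closure (hu : M.Unbounded)
    {X : Set (Sym2 ℕ)} (hXfin : X.Finite) {W : Set ℕ} (hW : W.Infinite)
    (hcl : clique W ⊆ M.M.closure X) : False := by
  obtain ⟨n, hn⟩ := hu X.ncard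
  have hle : M.rk (cliqueN n) ≤ X.ncard := by
    have hne : (0 : ℕ) ∈ {k : ℕ | ∃ I ⊆ cliqueN n, M.M.Indep I ∧ I.ncard = k} :=
      ⟨∅, Set.empty_subset _, M.M.empty_indep, by simp⟩
    apply csSup_le ⟨0, hne⟩
    rintro k ⟨J, hJsub, hJind, rfl⟩
    obtain ⟨emb⟩ : Nonempty (ℕ ↪ ↥W) := ⟨hW.natEmbedding⟩
    have hg : ∀ i : ℕ, (emb i : ℕ) ∈ W := fun i => (emb i).2
    have hginj : Set.InjOn (fun v : ℕ => ((emb v : ℕ))) {v : ℕ | v < n} := by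
      intro u _ v _ huv
      exact emb.injective (Subtype.ext huv)
    obtain ⟨σ, hσ⟩ := exists_perm_extend (Set.finite_Iio n) hginj
    have hJ' : M.Indep (Sym2.map σ '' J) := M.invariant σ J hJind
    have hmap : Sym2.map σ '' J ⊆ clique W := by
      rintro _ ⟨e, he, rfl⟩
      have heC : e ∈ cliqueN n := hJsub he
      revert heC
      induction e using Sym2.ind with
      | _ a b =>
        rintro ⟨hnd, hmem⟩
        have ha : a < n := hmem a (Sym2.mem_mk_left a b)
        have hb : b < n := hmem b (Sym2.mem_mk_right a b)
        have hne' : a ≠ b := fun h => hnd (Sym2.mk_isDiag_iff.mpr h)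
        rw [Sym2.map_pair_eq]
        refine ⟨fun h => hne' (σ.injective (Sym2.mk_isDiag_iff.mp h)), ?_⟩
        intro v hv
        rcases Sym2.mem_iff.mp hv with h | h
        · rw [h, hσ a ha]; exact hg a
        · rw [h, hσ b hb]; exact hg b
    have hJcl : Sym2.map σ '' J ⊆ M.M.closure X := fun e he' => hcl (hmap he')
    have hcard : (Sym2.map σ '' J).encard ≤ X.encard :=
      M.encard_le_of_indep_subset_closure hJ' hJcl
    rw [(Sym2.map.injective σ.injective).encard_image] at hcard
    rw [Set.ncard_def, Set.ncard_def]
    exact ENat.toNat_le_toNat hcard hXfin.encard_lt_top.ne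
  exact absurd hn (not_lt.mpr hle)

lemma mem_closure_of_dep {I : Set (Sym2 ℕ)} {g : Sym2 ℕ}
    (hI : M.Indep I) (hg : ¬ g.IsDiag) (hdep : ¬ M.Indep (I ∪ {g})) :
    g ∈ M.M.closure I := by
  rw [Set.union_singleton] at hdep
  by_cases hgI : g ∈ I
  · exact M.M.subset_closure I hI.subset_ground hgI
  by_contra hcl
  exact hdep ((Matroid.Indep.insert_indep_iff hI).mpr
    (Or.inl ⟨by rw [M.ground_eq]; exact hg, hcl⟩))

lemma indep_single (hu : M.Unbounded) {a b : ℕ} (hab : a ≠ b) : M.Indep {s(a, b)} := by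
  by_contra hdep
  obtain ⟨n, hn⟩ := hu 0
  have hle : M.rk (cliqueN n) ≤ 0 := by
    have hne : (0 : ℕ) ∈ {k : ℕ | ∃ I ⊆ cliqueN n, M.M.Indep I ∧ I.ncard = k} :=
      ⟨∅, Set.empty_subset _, M.M.empty_indep, by simp⟩
    apply csSup_le ⟨0, hne⟩
    rintro k ⟨J, hJsub, hJind, rfl⟩
    have hJe : J = ∅ := by
      by_contra hJne
      obtain ⟨g, hg⟩ := Set.nonempty_iff_ne_empty.mpr hJne
      obtain ⟨hnd, _⟩ := hJsub hg
      revert hnd hg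
      induction g using Sym2.ind with
      | _ c d =>
        intro hg hnd
        have hcd : c ≠ d := fun h => hnd (Sym2.mk_isDiag_iff.mpr h)
        have hsingle : M.Indep {s(c, d)} := hJind.subset (Set.singleton_subset_iff.mpr hg)
        obtain ⟨σ, h1, h2, -⟩ := exists_perm_pair ∅ (Set.finite_empty)
          (Set.notMem_empty a) (Set.notMem_empty b) (Set.notMem_empty c)
          (Set.notMem_empty d) hab hcd
        have himg : Sym2.map σ '' {s(c, d)} = {s(a, b)} := by
          rw [Set.image_singleton, Sym2.map_pair_eq, h1, h2]
        exact hdep (himg ▸ M.invariant σ _ hsingle)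
    simp [hJe]
  exact absurd hn (not_lt.mpr hle)

/-- Adding an edge disjoint from an independent graph preserves independence. -/
lemma indep_union_fresh (hu : M.Unbounded) {I : Set (Sym2 ℕ)} {p q : ℕ}
    (hI : M.Indep I) (hfin : I.Finite) (hp : p ∉ eSupp I) (hq : q ∉ eSupp I) (hpq : p ≠ q) :
    M.Indep (I ∪ {s(p, q)}) := by
  by_contra hdep
  have hEfin := eSupp_finite hfin
  have key : ∀ p' q' : ℕ, p' ∉ eSupp I → q' ∉ eSupp I → p' ≠ q' →
      s(p', q') ∈ M.M.closure I := by
    intro p' q' hp' hq' hpq'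
    obtain ⟨σ, hσp, hσq, hσfix⟩ := exists_perm_pair (eSupp I) hEfin hp hq hp' hq' hpq hpq'
    have hdep' : ¬ M.Indep (I ∪ {s(p', q')}) := by
      intro hind
      apply hdep
      have himg : Sym2.map σ '' (I ∪ {s(p', q')}) = I ∪ {s(p, q)} := by
        rw [Set.image_union, Set.image_singleton, Sym2.map_pair_eq, hσp, hσq,
          image_fix hσfix]
      exact himg ▸ M.invariant σ _ hind
    exact M.mem_closure_of_dep hI (fun h => hpq' (Sym2.mk_isDiag_iff.mp h)) hdep'
  apply M.false_of_clique_subset_closure hu hfin hEfin.infinite_compl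
  intro e he
  revert he
  induction e using Sym2.ind with
  | _ a b =>
    rintro ⟨hnd, hmem⟩
    exact key a b (hmem a (Sym2.mem_mk_left a b)) (hmem b (Sym2.mem_mk_right a b))
      (fun h => hnd (Sym2.mk_isDiag_iff.mpr h))

lemma pendant_closure {I : Set (Sym2 ℕ)} {x w : ℕ}
    (hI : M.Indep I) (hfin : I.Finite) (hx : x ∈ eSupp I) (hw : w ∉ eSupp I)
    (hdep : ¬ M.Indep (I ∪ {s(w, x)})) :
    ∀ z, z ∉ eSupp I → z ≠ x → s(z, x) ∈ M.M.closure I := by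
  intro z hz hzx
  have hEfin' : (eSupp I ∪ {w, z}).Finite := (eSupp_finite hfin).union (Set.toFinite _)
  obtain ⟨emb⟩ : Nonempty (ℕ ↪ ↥((eSupp I ∪ {w, z})ᶜ)) := ⟨hEfin'.infinite_compl.natEmbedding⟩
  have ht : (emb 0 : ℕ) ∉ eSupp I ∪ {w, z} := (emb 0).2
  set t : ℕ := (emb 0 : ℕ) with htdef
  simp only [Set.mem_union, Set.mem_insert_iff, Set.mem_singleton_iff, not_or] at ht
  obtain ⟨htV, htw, htz⟩ := ht
  obtain ⟨σ, hσz, hσt, hσfix⟩ := exists_perm_pair (eSupp I) (eSupp_finite hfin)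
    hw htV hz htV (Ne.symm htw) (Ne.symm htz)
  have hdep' : ¬ M.Indep (I ∪ {s(z, x)}) := by
    intro hind
    apply hdep
    have himg : Sym2.map σ '' (I ∪ {s(z, x)}) = I ∪ {s(w, x)} := by
      rw [Set.image_union, Set.image_singleton, Sym2.map_pair_eq, hσz, hσfix x hx,
        image_fix hσfix]
    exact himg ▸ M.invariant σ _ hind
  exact M.mem_closure_of_dep hI (fun h => hzx (Sym2.mk_isDiag_iff.mp h)) hdep'

end GraphMatroidFamily

/-- The standard star `K_{1,t}` with centre `0` and tips `1, …, t`. -/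
def stdStar (t : ℕ) : Set (Sym2 ℕ) := (fun i => s(0, i + 1)) '' ↑(Finset.range t)

namespace GraphMatroidFamily

variable (M : GraphMatroidFamily)

lemma star_indep_iff {c : ℕ} {f : ℕ → ℕ} {t : ℕ}
    (hinj : Set.InjOn f ↑(Finset.range t)) (hc : ∀ i, i < t → f i ≠ c) :
    M.Indep ((fun i => s(c, f i)) '' ↑(Finset.range t)) ↔ M.Indep (stdStar t) := by
  set A : Set ℕ := insert 0 ((fun i => i + 1) '' ↑(Finset.range t)) with hA
  have hAfin : A.Finite := (((Finset.range t).finite_toSet).image _).insert 0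
  set g : ℕ → ℕ := fun v => if v = 0 then c else f (v - 1) with hg
  have hg0 : g 0 = c := by simp [hg]
  have hgs : ∀ i, i < t → g (i + 1) = f i := by intro i _; simp [hg]
  have hginj : Set.InjOn g A := by
    intro u hu v hv huv
    rcases (by simpa [hA] using hu : u = 0 ∨ ∃ i, i < t ∧ i + 1 = u) with rfl | ⟨i, hi, rfl⟩ <;>
      rcases (by simpa [hA] using hv : v = 0 ∨ ∃ j, j < t ∧ j + 1 = v) with rfl | ⟨j, hj, rfl⟩
    · rfl
    · rw [hg0, hgs j hj] at huv; exact absurd huv.symm (hc j hj)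
    · rw [hg0, hgs i hi] at huv; exact absurd huv (hc i hi)
    · rw [hgs i hi, hgs j hj] at huv
      have := hinj (by simpa using hi) (by simpa using hj) huv
      omega
  obtain ⟨σ, hσ⟩ := exists_perm_extend hAfin hginj
  have hσ0 : σ 0 = c := by rw [hσ 0 (Set.mem_insert _ _), hg0]
  have hσs : ∀ i, i < t → σ (i + 1) = f i := by
    intro i hi
    rw [hσ (i + 1) (Set.mem_insert_of_mem _ ⟨i, by simpa using hi, rfl⟩), hgs i hi]
  have himg : Sym2.map σ '' stdStar t = (fun i => s(c, f i)) '' ↑(Finset.range t) := by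
    rw [stdStar, ← Set.image_comp]
    apply Set.image_congr
    intro i hi
    have hi' : i < t := by simpa using hi
    simp only [Function.comp_apply]
    rw [Sym2.map_pair_eq, hσ0, hσs i hi']
  rw [← himg]
  exact M.indep_map_iff σ

/-- Adding a pendant edge to an independent graph preserves independence
(for unbounded families). -/
lemma indep_union_pendant (hu : M.Unbounded) {I : Set (Sym2 ℕ)} {x w : ℕ}
    (hI : M.Indep I) (hfin : I.Finite) (hw : w ∉ eSupp I) (hwx : w ≠ x) :
    M.Indep (I ∪ {s(w, x)}) := by
  by_cases hx : x ∈ eSupp I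
  swap
  · exact M.indep_union_fresh hu hI hfin hw hx hwx
  by_contra hdep
  have hEfin := eSupp_finite hfin
  have hcl := M.pendant_closure hI hfin hx hw hdep
  -- there is a dependent star
  have hstar : ∃ t, ¬ M.Indep (stdStar t) := by
    have hcomp : ((insert x (eSupp I))ᶜ : Set ℕ).Infinite := (hEfin.insert x).infinite_compl
    obtain ⟨emb⟩ : Nonempty (ℕ ↪ ↥((insert x (eSupp I))ᶜ : Set ℕ)) := ⟨hcomp.natEmbedding⟩
    set tips : ℕ → ℕ := fun i => (emb i : ℕ) with htips
    have htinj : Function.Injective tips := fun i j hij => emb.injective (Subtype.ext hij)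
    have htmem : ∀ i, tips i ∉ insert x (eSupp I) := fun i => (emb i).2
    have ht1 : ∀ i, tips i ∉ eSupp I := fun i h => htmem i (Set.mem_insert_of_mem _ h)
    have ht2 : ∀ i, tips i ≠ x := fun i h => htmem i (h ▸ Set.mem_insert _ _)
    refine ⟨I.ncard + 1, fun hind => ?_⟩
    have hSind : M.Indep ((fun i => s(x, tips i)) '' ↑(Finset.range (I.ncard + 1))) := by
      rw [M.star_indep_iff (htinj.injOn) (fun i _ h => ht2 i (h ▸ rfl))]
      · exact hind
    have hsub : ((fun i => s(x, tips i)) '' ↑(Finset.range (I.ncard + 1))) ⊆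
        M.M.closure I := by
      rintro _ ⟨i, _, rfl⟩
      have h := hcl (tips i) (ht1 i) (ht2 i)
      rwa [Sym2.eq_swap] at h
    have hcard := M.encard_le_of_indep_subset_closure hSind hsub
    have hinj2 : Set.InjOn (fun i => s(x, tips i)) ↑(Finset.range (I.ncard + 1)) := by
      intro i _ j _ hij
      rcases Sym2.eq_iff.mp hij with ⟨-, h2⟩ | ⟨h1, -⟩
      · exact htinj h2
      · exact absurd h1.symm (ht2 j)
    rw [hinj2.encard_image, Set.encard_coe_eq_coe_finsetCard, Finset.card_range,
      hfin.encard_eq_coe_toFinset_card, ← Set.ncard_eq_toFinset_card _ hfin] at hcard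
    have : I.ncard + 1 ≤ I.ncard := by exact_mod_cast hcard
    omega
  classical
  have hPm : ¬ M.Indep (stdStar (Nat.find hstar)) := Nat.find_spec hstar
  have hmin : ∀ j, j < Nat.find hstar → M.Indep (stdStar j) :=
    fun j hj => not_not.mp (Nat.find_min hstar hj)
  set m : ℕ := Nat.find hstar with hmdef
  have hm0 : M.Indep (stdStar 0) := by
    have : stdStar 0 = ∅ := by simp [stdStar]
    rw [this]; exact M.M.empty_indep
  have hm1 : M.Indep (stdStar 1) := by
    have : stdStar 1 = {s(0, 1)} := by simp [stdStar]
    rw [this]; exact M.indep_single hu (by omega)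
  have hm2 : 2 ≤ m := by
    by_contra hlt
    interval_cases m
    · exact hPm hm0
    · exact hPm hm1
  set k : ℕ := m - 1 with hkdef
  have hkm : k + 1 = m := by omega
  have hkm' : k < m := by omega
  obtain ⟨N, hN⟩ : ∃ N, ∀ v ∈ eSupp I, v < N := by
    obtain ⟨b, hb⟩ := hEfin.bddAbove
    exact ⟨b + 1, fun v hv => Nat.lt_succ_of_le (hb hv)⟩
  have hN1 : 1 ≤ N := by have := hN x hx; omega
  set xi : ℕ → ℕ := fun i => x + (i + 1) * N with hxi
  -- construct the copies
  have hcopy : ∀ i : ℕ, ∃ Ii : Set (Sym2 ℕ), M.Indep Ii ∧ Ii.Finite ∧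
      eSupp Ii = (fun v => v + (i + 1) * N) '' eSupp I ∧
      (∀ z, z ∉ eSupp Ii → z ≠ xi i → s(z, xi i) ∈ M.M.closure Ii) := by
    intro i
    have hinj : Set.InjOn (fun v => v + (i + 1) * N) (eSupp I) := by
      intro a _ b _ h
      simp only at h
      omega
    obtain ⟨σ, hσ⟩ := exists_perm_extend hEfin hinj
    have hIi : M.Indep (Sym2.map σ '' I) := M.invariant σ I hI
    have hsupp : eSupp (Sym2.map σ '' I) = (fun v => v + (i + 1) * N) '' eSupp I := by
      rw [eSupp_image]
      exact Set.image_congr hσ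
    have hxmem : xi i ∈ eSupp (Sym2.map σ '' I) := by
      rw [hsupp]
      exact ⟨x, hx, rfl⟩
    have hσx : σ x = xi i := hσ x hx
    have hwmem : σ w ∉ eSupp (Sym2.map σ '' I) := by
      rw [eSupp_image]
      rintro ⟨u, hu, huw⟩
      exact hw ((σ.injective huw) ▸ hu)
    have hdep' : ¬ M.Indep (Sym2.map σ '' I ∪ {s(σ w, xi i)}) := by
      intro hind
      apply hdep
      have himg : Sym2.map σ '' (I ∪ {s(w, x)}) = Sym2.map σ '' I ∪ {s(σ w, xi i)} := by
        rw [Set.image_union, Set.image_singleton, Sym2.map_pair_eq, hσx]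
      rw [← (M.indep_map_iff σ (S := I ∪ {s(w, x)})), himg]
      exact hind
    exact ⟨Sym2.map σ '' I, hIi, hfin.image _, hsupp,
      M.pendant_closure hIi (hfin.image _) hxmem hwmem hdep'⟩
  choose Ii hIind hIfin hIsupp hIcl using hcopy
  set U : Set (Sym2 ℕ) := ⋃ i ∈ Finset.range k, Ii i with hU
  have hUfin : U.Finite := Set.Finite.biUnion (Finset.range k).finite_toSet fun i _ => hIfin i
  apply M.false_of_clique_subset_closure hu hUfin (Set.Ici_infinite ((k + 1) * N))
  intro e he
  revert he
  induction e using Sym2.ind with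
  | _ a b =>
    rintro ⟨hnd, hmem⟩
    have ha : (k + 1) * N ≤ a := hmem a (Sym2.mem_mk_left a b)
    have hb : (k + 1) * N ≤ b := hmem b (Sym2.mem_mk_right a b)
    have hab : a ≠ b := fun h => hnd (Sym2.mk_isDiag_iff.mpr h)
    have hile : ∀ i, i < k → (i + 2) * N ≤ (k + 1) * N :=
      fun i hik => Nat.mul_le_mul_right _ (by omega)
    have hsupp_lt : ∀ i, i < k → ∀ v ∈ eSupp (Ii i), v < (i + 2) * N := by
      intro i hik v hv
      rw [hIsupp i] at hv
      obtain ⟨u, hu, rfl⟩ := hv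
      have h1 := hN u hu
      calc u + (i + 1) * N < N + (i + 1) * N := by omega
        _ = (i + 2) * N := by ring
    have hxiN : ∀ i, i < k → xi i < (i + 2) * N := by
      intro i hik
      have h1 := hN x hx
      calc x + (i + 1) * N < N + (i + 1) * N := by omega
        _ = (i + 2) * N := by ring
    have hafresh : ∀ i, i < k → a ∉ eSupp (Ii i) := fun i hik hmem' => by
      have h1 := hsupp_lt i hik a hmem'
      have h2 := hile i hik
      omega
    have hbfresh : ∀ i, i < k → b ∉ eSupp (Ii i) := fun i hik hmem' => by
      have h1 := hsupp_lt i hik b hmem'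
      have h2 := hile i hik
      omega
    have haxi : ∀ i, i < k → a ≠ xi i := fun i hik h => by
      have h1 := hxiN i hik
      have h2 := hile i hik
      omega
    have hbxi : ∀ i, i < k → b ≠ xi i := fun i hik h => by
      have h1 := hxiN i hik
      have h2 := hile i hik
      omega
    set T : Set (Sym2 ℕ) := (fun i => s(a, xi i)) '' ↑(Finset.range k) with hT
    have hTcl : T ⊆ M.M.closure U := by
      rintro _ ⟨i, hi, rfl⟩
      have hik : i < k := by simpa using hi
      have h1 := hIcl i a (hafresh i hik) (haxi i hik)
      exact M.M.closure_subset_closure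
        (Set.subset_biUnion_of_mem (by simpa using hik : i ∈ Finset.range k)) h1
    have hxiinj : Set.InjOn xi ↑(Finset.range k) := by
      intro i _ j _ hij
      simp only [hxi] at hij
      have := Nat.eq_of_mul_eq_mul_right (show 0 < N by omega)
        (show (i + 1) * N = (j + 1) * N by omega)
      omega
    have hTind : M.Indep T := by
      rw [hT, M.star_indep_iff hxiinj (fun i hik h => haxi i hik h.symm)]
      exact hmin k hkm'
    have hdepT : ¬ M.Indep (T ∪ {s(a, b)}) := by
      set f' : ℕ → ℕ := fun i => if i = k then b else xi i with hf'
      have hf'k : f' k = b := by simp [hf']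
      have hf'lt : ∀ i, i < k → f' i = xi i := by
        intro i hik
        simp [hf', Nat.ne_of_lt hik]
      have himg : (fun i => s(a, f' i)) '' ↑(Finset.range (k + 1)) = T ∪ {s(a, b)} := by
        rw [Finset.range_add_one, Finset.coe_insert, Set.image_insert_eq, hf'k,
          Set.union_singleton, hT]
        congr 1
        apply Set.image_congr
        intro i hi
        rw [hf'lt i (by simpa using hi)]
      intro hind
      rw [← himg] at hind
      have hinjf' : Set.InjOn f' ↑(Finset.range (k + 1)) := by
        intro i hi j hj hij
        have hi' : i < k + 1 := by simpa using hi
        have hj' : j < k + 1 := by simpa using hj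
        by_cases hik : i = k <;> by_cases hjk : j = k
        · omega
        · rw [hik, hf'k, hf'lt j (by omega)] at hij
          exact absurd hij (hbxi j (by omega))
        · rw [hjk, hf'k, hf'lt i (by omega)] at hij
          exact absurd hij.symm (hbxi i (by omega))
        · rw [hf'lt i (by omega), hf'lt j (by omega)] at hij
          exact hxiinj (by simpa using (by omega : i < k)) (by simpa using (by omega : j < k)) hij
      have hcf' : ∀ i, i < k + 1 → f' i ≠ a := by
        intro i hi
        by_cases hik : i = k
        · rw [hik, hf'k]; exact Ne.symm hab
        · rw [hf'lt i (by omega)]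
          exact fun h => haxi i (by omega) h.symm
      rw [M.star_indep_iff hinjf' hcf'] at hind
      rw [hkm] at hind
      exact hPm hind
    have hmem_cl : s(a, b) ∈ M.M.closure T :=
      M.mem_closure_of_dep hTind (fun h => hab (Sym2.mk_isDiag_iff.mp h)) hdepT
    exact M.M.closure_subset_closure_of_subset_closure hTcl hmem_cl

end GraphMatroidFamily

namespace GraphMatroidFamily

variable (M : GraphMatroidFamily)

/-- If `e` lies in no `M`-circuit contained in `G`, then `e` is a coloop of `M(G)`. -/
lemma indep_of_no_circuit {G : Set (Sym2 ℕ)} (hG : IsGraph G) {e : Sym2 ℕ}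
    (hnc : ¬ ∃ C : Set (Sym2 ℕ), C ⊆ G ∧ M.IsCircuit C ∧ e ∈ C)
    {S : Set (Sym2 ℕ)} (hSG : S ⊆ G) (hSd : M.Indep (S \ {e})) : M.Indep S := by
  by_contra hdep
  have hne : S.ncard ∈ {k : ℕ | ∃ C, C ⊆ S ∧ ¬ M.Indep C ∧ C.ncard = k} :=
    ⟨S, subset_rfl, hdep, rfl⟩
  obtain ⟨C, hCS, hCdep, hCcard⟩ := Nat.sInf_mem (Set.nonempty_of_mem hne)
  have hCG : C ⊆ G := hCS.trans hSG
  have hCfin : C.Finite := hG.1.subset hCG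
  have hmin : ∀ f ∈ C, M.Indep (C \ {f}) := by
    intro f hf
    by_contra hfd
    have hmem : (C \ {f}).ncard ∈ {k : ℕ | ∃ C, C ⊆ S ∧ ¬ M.Indep C ∧ C.ncard = k} :=
      ⟨C \ {f}, Set.diff_subset.trans hCS, hfd, rfl⟩
    have hlt : (C \ {f}).ncard < C.ncard := Set.ncard_diff_singleton_lt_of_mem hf hCfin
    have := Nat.sInf_le hmem
    omega
  have heC : e ∈ C := by
    by_contra hec
    exact hCdep (hSd.subset fun g hg => ⟨hCS hg, fun h => hec (Set.mem_singleton_iff.mp h ▸ hg)⟩)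
  exact hnc ⟨C, hCG, ⟨⟨hCfin, fun f hf => hG.2 f (hCG hf)⟩, hCdep, hmin⟩, heC⟩

/-- Common construction: relocating a bridge `e` of `M(G)` to a new position `e'`. -/
lemma relocate_bridge {G : Set (Sym2 ℕ)} {e : Sym2 ℕ} (hG : IsGraph G)
    (hrec : M.Reconstructible G) (he : e ∈ G)
    (hcoloop : ∀ S ⊆ G, M.Indep (S \ {e}) → M.Indep S)
    (e' : Sym2 ℕ) (he'nd : ¬ e'.IsDiag) (he'G : e' ∉ G)
    (hfree : ∀ S ⊆ G, M.Indep (S \ {e}) → M.Indep ((S \ {e}) ∪ {e'})) :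
    ∃ φ : ℕ → ℕ, Set.BijOn φ (eSupp G) (eSupp ((G \ {e}) ∪ {e'})) ∧
      (∀ g ∈ G, (if g = e then e' else g) = Sym2.map φ g) := by
  classical
  set H : Set (Sym2 ℕ) := (G \ {e}) ∪ {e'} with hH
  set ψ : Sym2 ℕ → Sym2 ℕ := fun g => if g = e then e' else g with hψ
  have hHgraph : IsGraph H := by
    constructor
    · exact (hG.1.subset Set.diff_subset).union (Set.finite_singleton e')
    · rintro g (hg | hg)
      · exact hG.2 g hg.1
      · rwa [Set.mem_singleton_iff.mp hg]
  have hbij : Set.BijOn ψ G H := by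
    refine ⟨?_, ?_, ?_⟩
    · intro g hg
      by_cases hge : g = e
      · rw [hψ]; simp only [if_pos hge]
        exact Or.inr rfl
      · rw [hψ]; simp only [if_neg hge]
        exact Or.inl ⟨hg, hge⟩
    · intro g1 h1 g2 h2 hg
      by_cases e1 : g1 = e <;> by_cases e2 : g2 = e
      · rw [e1, e2]
      · exfalso
        rw [hψ] at hg; simp only [if_pos e1, if_neg e2] at hg
        exact he'G (hg ▸ h2)
      · exfalso
        rw [hψ] at hg; simp only [if_neg e1, if_pos e2] at hg
        exact he'G (hg ▸ h1)
      · rw [hψ] at hg; simpa only [if_neg e1, if_neg e2] using hg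
    · rintro h (⟨hhG, hhe⟩ | hh)
      · exact ⟨h, hhG, by rw [hψ]; simp only [if_neg (fun h' => hhe (Set.mem_singleton_iff.mpr h'))]⟩
      · exact ⟨e, he, by rw [hψ]; simp only [if_pos rfl]; exact (Set.mem_singleton_iff.mp hh).symm⟩
  have hiso : M.MatroidIso G H ψ := by
    refine ⟨hbij, fun S hSG => ?_⟩
    by_cases heS : e ∈ S
    · have himg : ψ '' S = (S \ {e}) ∪ {e'} := by
        ext g
        constructor
        · rintro ⟨g₀, hg₀, rfl⟩
          by_cases hg₀e : g₀ = e
          · right; rw [hψ]; simp only [if_pos hg₀e]; rfl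
          · left
            rw [hψ]; simp only [if_neg hg₀e]
            exact ⟨hg₀, hg₀e⟩
        · rintro (⟨hgS, hge⟩ | hg)
          · exact ⟨g, hgS, by rw [hψ]; simp only [if_neg (fun h' => hge (Set.mem_singleton_iff.mpr h'))]⟩
          · refine ⟨e, heS, ?_⟩
            rw [hψ]; simp only [if_pos rfl]
            exact (Set.mem_singleton_iff.mp hg).symm
      rw [himg]
      constructor
      · intro hS
        exact hfree S hSG (hS.subset Set.diff_subset)
      · intro hS
        exact hcoloop S hSG (hS.subset Set.subset_union_left)
    · have hju : ∀ g₀ ∈ S, ψ g₀ = g₀ := by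
        intro g₀ hg₀
        have hne : g₀ ≠ e := fun h => heS (h ▸ hg₀)
        rw [hψ]; simp only [if_neg hne]
      have himg : ψ '' S = S := by
        ext g
        constructor
        · rintro ⟨g₀, hg₀, rfl⟩
          rw [hju g₀ hg₀]; exact hg₀
        · intro hg
          exact ⟨g, hg, hju g hg⟩
      rw [himg]
  obtain ⟨φ, hφ1, hφ2⟩ := hrec H hHgraph ψ hiso
  exact ⟨φ, hφ1, fun g hg => by have := hφ2 g hg; rwa [hψ] at this⟩

end GraphMatroidFamily

/-- If `M` is an unbounded graph matroid family and `G` is an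
`M`-reconstructible graph with at least two edges, then `M(G)` has no bridges
(coloops): every edge of `G` lies in some `M`-circuit contained in `G`. -/
theorem reconstructible_bridgeless (M : GraphMatroidFamily) (hu : M.Unbounded)
    (G : Set (Sym2 ℕ)) (hG : IsGraph G) (h2 : 2 ≤ G.ncard)
    (hrec : M.Reconstructible G) :
    ∀ e ∈ G, ∃ C : Set (Sym2 ℕ), C ⊆ G ∧ M.IsCircuit C ∧ e ∈ C := by
  intro e he
  by_contra hnc
  have hGfin := hG.1
  have hEfin : (eSupp G).Finite := eSupp_finite hGfin
  obtain ⟨emb⟩ : Nonempty (ℕ ↪ ↥((eSupp G)ᶜ : Set ℕ)) := ⟨hEfin.infinite_compl.natEmbedding⟩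
  set p : ℕ := (emb 0 : ℕ) with hpdef
  set q : ℕ := (emb 1 : ℕ) with hqdef
  have hp : p ∉ eSupp G := (emb 0).2
  have hq : q ∉ eSupp G := (emb 1).2
  have hpq : p ≠ q := fun h => by simpa using emb.injective (Subtype.ext h)
  have hcoloop : ∀ S ⊆ G, M.Indep (S \ {e}) → M.Indep S :=
    fun S hS => M.indep_of_no_circuit hG hnc hS
  obtain ⟨a, b, hab⟩ : ∃ a b, e = s(a, b) := by
    induction e using Sym2.ind with
    | _ a b => exact ⟨a, b, rfl⟩
  have hnd : ¬ e.IsDiag := hG.2 e he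
  have hanb : a ≠ b := by
    rw [hab] at hnd
    exact fun h => hnd (Sym2.mk_isDiag_iff.mpr h)
  by_cases hshare : ∃ z, z ∈ e ∧ z ∈ eSupp (G \ {e})
  · -- Case 1 : `e` shares a vertex `u` with another edge `f`.
    obtain ⟨u, hue, f, hfG', huf⟩ := hshare
    have he'G : s(p, q) ∉ G := fun h => hp ⟨s(p, q), h, Sym2.mem_mk_left p q⟩
    have hfree : ∀ S ⊆ G, M.Indep (S \ {e}) → M.Indep ((S \ {e}) ∪ {s(p, q)}) := by
      intro S hS hind
      have hsub : eSupp (S \ {e}) ⊆ eSupp G := eSupp_mono (Set.diff_subset.trans hS)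
      exact M.indep_union_fresh hu hind (hGfin.subset (Set.diff_subset.trans hS))
        (fun h => hp (hsub h)) (fun h => hq (hsub h)) hpq
    obtain ⟨φ, hφbij, hφedge⟩ := M.relocate_bridge hG hrec he hcoloop (s(p, q))
      (fun h => hpq (Sym2.mk_isDiag_iff.mp h)) he'G hfree
    have hfe : f ≠ e := fun h => hfG'.2 (Set.mem_singleton_iff.mpr h)
    have h1 : Sym2.map φ f = f := by
      have h := hφedge f hfG'.1
      rw [if_neg hfe] at h
      exact h.symm
    have h2 : φ u ∈ f := by
      have : φ u ∈ Sym2.map φ f := Sym2.mem_map.mpr ⟨u, huf, rfl⟩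
      rwa [h1] at this
    have h3 : φ u ∈ eSupp G := ⟨f, hfG'.1, h2⟩
    have h4 : s(p, q) = Sym2.map φ e := by
      have h := hφedge e he
      rwa [if_pos rfl] at h
    rw [hab, Sym2.map_pair_eq] at h4
    have hu_ab : u = a ∨ u = b := by
      rw [hab] at hue
      exact Sym2.mem_iff.mp hue
    have hPQ : φ u = p ∨ φ u = q := by
      rcases Sym2.eq_iff.mp h4 with ⟨h5, h6⟩ | ⟨h5, h6⟩ <;>
        rcases hu_ab with rfl | rfl
      · exact Or.inl h5.symm
      · exact Or.inr h6.symm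
      · exact Or.inr h6.symm
      · exact Or.inl h5.symm
    rcases hPQ with h | h
    · exact hp (h ▸ h3)
    · exact hq (h ▸ h3)
  · -- Case 2 : `e` is an isolated edge.
    push_neg at hshare
    have haG' : a ∉ eSupp (G \ {e}) := hshare a (by rw [hab]; exact Sym2.mem_mk_left a b)
    have hbG' : b ∉ eSupp (G \ {e}) := hshare b (by rw [hab]; exact Sym2.mem_mk_right a b)
    obtain ⟨f, hfG, hfe⟩ := Set.exists_ne_of_one_lt_ncard (s := G) (by omega) e
    have hfG' : f ∈ G \ {e} := ⟨hfG, fun h => hfe (Set.mem_singleton_iff.mp h)⟩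
    obtain ⟨x, y, hfxy⟩ : ∃ x y, f = s(x, y) := by
      induction f using Sym2.ind with
      | _ x y => exact ⟨x, y, rfl⟩
    have hxG' : x ∈ eSupp (G \ {e}) := ⟨f, hfG', by rw [hfxy]; exact Sym2.mem_mk_left x y⟩
    have hxG : x ∈ eSupp G := eSupp_mono Set.diff_subset hxG'
    have hwx : p ≠ x := fun h => hp (h ▸ hxG)
    have he'G : s(p, x) ∉ G := fun h => hp ⟨s(p, x), h, Sym2.mem_mk_left p x⟩
    have hfree : ∀ S ⊆ G, M.Indep (S \ {e}) → M.Indep ((S \ {e}) ∪ {s(p, x)}) := by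
      intro S hS hind
      have hsub : eSupp (S \ {e}) ⊆ eSupp G := eSupp_mono (Set.diff_subset.trans hS)
      exact M.indep_union_pendant hu hind (hGfin.subset (Set.diff_subset.trans hS))
        (fun h => hp (hsub h)) hwx
    obtain ⟨φ, hφbij, hφedge⟩ := M.relocate_bridge hG hrec he hcoloop (s(p, x))
      (fun h => hwx (Sym2.mk_isDiag_iff.mp h)) he'G hfree
    -- counting vertices
    have hfinG' : (eSupp (G \ {e})).Finite := eSupp_finite (hGfin.subset Set.diff_subset)
    have hGsplit : eSupp G = eSupp (G \ {e}) ∪ {a, b} := by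
      conv_lhs => rw [← Set.diff_union_of_subset (Set.singleton_subset_iff.mpr he)]
      rw [eSupp_union, hab, eSupp_single]
    have hdisj : Disjoint (eSupp (G \ {e})) ({a, b} : Set ℕ) := by
      rw [Set.disjoint_right]
      rintro v (rfl | hv)
      · exact haG'
      · rw [Set.mem_singleton_iff] at hv
        exact hv ▸ hbG'
    have hcardG : (eSupp G).ncard = (eSupp (G \ {e})).ncard + 2 := by
      rw [hGsplit, Set.ncard_union_eq hdisj hfinG' (Set.toFinite _), Set.ncard_pair hanb]
    have hHsupp : eSupp ((G \ {e}) ∪ {s(p, x)}) = insert p (eSupp (G \ {e})) := by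
      rw [eSupp_union, eSupp_single]
      ext v
      simp only [Set.mem_union, Set.mem_insert_iff, Set.mem_singleton_iff]
      constructor
      · rintro (hv | rfl | rfl)
        · exact Or.inr hv
        · exact Or.inl rfl
        · exact Or.inr hxG'
      · rintro (rfl | hv)
        · exact Or.inr (Or.inl rfl)
        · exact Or.inl hv
    have hpG' : p ∉ eSupp (G \ {e}) := fun h => hp (eSupp_mono Set.diff_subset h)
    have hcardH : (eSupp ((G \ {e}) ∪ {s(p, x)})).ncard = (eSupp (G \ {e})).ncard + 1 := by
      rw [hHsupp, Set.ncard_insert_of_notMem hpG' hfinG']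
    have himage : φ '' eSupp G = eSupp ((G \ {e}) ∪ {s(p, x)}) := hφbij.image_eq
    have hcards : (eSupp G).ncard = (eSupp ((G \ {e}) ∪ {s(p, x)})).ncard := by
      rw [← himage, Set.ncard_image_of_injOn hφbij.injOn]
    omega
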